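/- Fixed-point property of the filter (HMM case): Let (X,Z) = HMM(μ,A,C) and fix an observation path z ∈ 𝕆^T with positive probability. Let π^(z)_t denote the nonlinear filter (conditional law of X_t given Z_1=z_1,...,Z_t=z_t). Define the map 𝒩 on T-tuples of probability measures ρ = (ρ_1,...,ρ_T) via the backward difference equation y_s = A y_{s+1} + c_{s+1} u_s with feedback u_s = φ(y_{s+1}; ρ_s, c_{s+1}) (and u_0 = φ(y_1; μ, c_1)), terminal condition y_t = f, and output (𝒩ρ)_t(f) = μ(y_0) − ∑_{s=0}^{t-1} u_s. Then 𝒩 π^(z) = π^(z). -/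

import Mathlib

open Finset

/-- Joint law of `HMM(μ₀, A, C)` (`zp t` stands for `Z_{t+1}`, emitted from `X_t`). -/
noncomputable def hmmJoint (d m T : ℕ) (μ0 : Fin d → ℝ)
    (A : Matrix (Fin d) (Fin d) ℝ) (C : Fin d → Fin (m + 1) → ℝ)
    (xp : Fin (T + 1) → Fin d) (zp : Fin T → Fin (m + 1)) : ℝ :=
  μ0 (xp 0) * (∏ t : Fin T, A (xp t.castSucc) (xp t.succ)) *
    ∏ t : Fin T, C (xp t.castSucc) (zp t)

/-- Nonlinear filter `π_t(x) = P(X_t = x ∣ Z_1 = z_1,…,Z_t = z_t)` for the fixed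
observation path `z` (with `z s` standing for `z_{s+1}`), defined for `t ≤ T`.  -/
noncomputable def filt (d m T : ℕ) (μ0 : Fin d → ℝ)
    (A : Matrix (Fin d) (Fin d) ℝ) (C : Fin d → Fin (m + 1) → ℝ)
    (z : ℕ → Fin (m + 1)) (t : ℕ) (x : Fin d) : ℝ :=
  if h : t ≤ T then
    (∑ xp : Fin (T + 1) → Fin d, ∑ zq : Fin T → Fin (m + 1),
        if (∀ s : Fin T, s.val < t → zq s = z s.val) ∧ xp ⟨t, Nat.lt_succ_of_le h⟩ = x
        then hmmJoint d m T μ0 A C xp zq else 0) /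
      (∑ xp : Fin (T + 1) → Fin d, ∑ zq : Fin T → Fin (m + 1),
        if ∀ s : Fin T, s.val < t → zq s = z s.val
        then hmmJoint d m T μ0 A C xp zq else 0)
  else 0

/-- Feedback gain
`φ(f; ν, c) = -(1 - ν(c)²)⁻¹ ν((Af)(c - ν(c)))` when `1 - ν(c)² ≠ 0`, else `0`. -/
noncomputable def phi (d : ℕ) (A : Matrix (Fin d) (Fin d) ℝ)
    (f ν c : Fin d → ℝ) : ℝ :=
  if 1 - (∑ x, ν x * c x) ^ 2 ≠ 0 then
    (-1 / (1 - (∑ x, ν x * c x) ^ 2)) *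
      ∑ x, ν x * ((∑ y, A x y * f y) * (c x - ∑ x', ν x' * c x'))
  else 0

/-- Backward difference equation `y_s = A y_{s+1} + c_{s+1} u_s` with feedback
`u_s = φ(y_{s+1}; ρ_s, c_{s+1})` (and `ρ_0 = μ`), terminal condition `y_t = f`.
Here `ydual … k` is `y` at time index `s = t - k`; `cseq s = c_{s+1}` and
`νseq s = ρ_s` (with `νseq 0 = μ`). -/
noncomputable def ydual (d : ℕ) (A : Matrix (Fin d) (Fin d) ℝ)
    (cseq νseq : ℕ → Fin d → ℝ) (t : ℕ) (f : Fin d → ℝ) : ℕ → Fin d → ℝ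
  | 0 => f
  | k + 1 =>
      let yk := ydual d A cseq νseq t f k
      let s := t - k - 1
      let u := phi d A yk (νseq s) (cseq s)
      fun x => (∑ y, A x y * yk y) + cseq s x * u

/-- The control input `u_s` at `s = t - k - 1`, i.e. `u_s = φ(y_{s+1}; ρ_s, c_{s+1})`. -/
noncomputable def udual (d : ℕ) (A : Matrix (Fin d) (Fin d) ℝ)
    (cseq νseq : ℕ → Fin d → ℝ) (t : ℕ) (f : Fin d → ℝ) (k : ℕ) : ℝ :=
  phi d A (ydual d A cseq νseq t f k) (νseq (t - k - 1)) (cseq (t - k - 1))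

/-- Output of the fixed-point map: `(𝒩ρ)_t(f) = μ(y_0) - ∑_{s=0}^{t-1} u_s`. -/
noncomputable def Nmap (d : ℕ) (μ0 : Fin d → ℝ) (A : Matrix (Fin d) (Fin d) ℝ)
    (cseq νseq : ℕ → Fin d → ℝ) (t : ℕ) (f : Fin d → ℝ) : ℝ :=
  (∑ x, μ0 x * ydual d A cseq νseq t f t x) -
    ∑ k ∈ Finset.range t, udual d A cseq νseq t f k


noncomputable def fwdF (d : ℕ) (μ0 : Fin d → ℝ) (w : ℕ → Fin d → Fin d → ℝ) : ℕ → Fin d → ℝ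
  | 0 => μ0
  | t + 1 => fun x => ∑ y, fwdF d μ0 w t y * w t y x

lemma sum_snoc {d n : ℕ} (F : (Fin (n + 1) → Fin d) → ℝ) :
    ∑ p : Fin (n + 1) → Fin d, F p
      = ∑ q : Fin n → Fin d, ∑ y : Fin d, F (Fin.snoc q y) := by
  have h := Fintype.sum_equiv (Fin.snocEquiv (fun _ => Fin d))
    (fun pr => F (Fin.snoc pr.2 pr.1)) F (fun pr => by simp [Fin.snocEquiv])
  rw [← h, Fintype.sum_prod_type]
  exact Finset.sum_comm

lemma pathsum (d : ℕ) (μ0 : Fin d → ℝ) (w : ℕ → Fin d → Fin d → ℝ) :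
    ∀ (n t : ℕ) (ht : t ≤ n), (∀ s, t ≤ s → s < n → ∀ a, ∑ b, w s a b = 1) → ∀ (x : Fin d),
    ∑ p : Fin (n + 1) → Fin d,
      (if p ⟨t, Nat.lt_succ_of_le ht⟩ = x then μ0 (p 0) * ∏ s : Fin n, w s (p s.castSucc) (p s.succ) else 0)
      = fwdF d μ0 w t x := by
  intro n
  induction n with
  | zero =>
    intro t ht _ x
    interval_cases t
    rw [sum_snoc (d := d) (n := 0)]
    simp only [Finset.univ_unique, Finset.sum_singleton]
    simp only [Fin.snoc, Nat.lt_irrefl, dite_false, not_lt_zero', Finset.univ_eq_empty,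
      Finset.prod_empty, mul_one, cast_eq]
    rw [Finset.sum_ite_eq']
    simp [fwdF]
  | succ n ih =>
    intro t ht hw x
    rw [sum_snoc]
    have hprod : ∀ (q : Fin (n+1) → Fin d) (y : Fin d),
        (∏ s : Fin (n+1), w s ((Fin.snoc q y : Fin (n+2) → Fin d) s.castSucc)
          ((Fin.snoc q y : Fin (n+2) → Fin d) s.succ))
        = (∏ s : Fin n, w s (q s.castSucc) (q s.succ)) * w n (q (Fin.last n)) y := by
      intro q y
      rw [Fin.prod_univ_castSucc]
      congr 1
      · apply Finset.prod_congr rfl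
        intro s _
        rw [Fin.succ_castSucc, Fin.snoc_castSucc, Fin.snoc_castSucc, Fin.coe_castSucc]
      · rw [show (Fin.last n).succ = Fin.last (n+1) from rfl, Fin.snoc_last,
          Fin.snoc_castSucc, Fin.val_last]
    have hzero : ∀ (q : Fin (n+1) → Fin d) (y : Fin d),
        (Fin.snoc q y : Fin (n+2) → Fin d) 0 = q 0 := by
      intro q y
      rw [show (0 : Fin (n+2)) = (0 : Fin (n+1)).castSucc from rfl, Fin.snoc_castSucc]
    rcases Nat.lt_or_ge t (n+1) with hlt | hge
    · -- t ≤ n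
      have htn : t ≤ n := Nat.lt_succ_iff.mp hlt
      have hcoord : ∀ (q : Fin (n+1) → Fin d) (y : Fin d),
          (Fin.snoc q y : Fin (n+2) → Fin d) ⟨t, Nat.lt_succ_of_le ht⟩
            = q ⟨t, Nat.lt_succ_of_le htn⟩ := by
        intro q y
        rw [show (⟨t, Nat.lt_succ_of_le ht⟩ : Fin (n+2))
            = (⟨t, Nat.lt_succ_of_le htn⟩ : Fin (n+1)).castSucc from rfl, Fin.snoc_castSucc]
      rw [← ih t htn (fun s hs hs' a => hw s hs (Nat.lt_succ_of_lt hs') a) x]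
      apply Finset.sum_congr rfl
      intro q _
      have step : ∀ y : Fin d,
          (if (Fin.snoc q y : Fin (n+2) → Fin d) ⟨t, Nat.lt_succ_of_le ht⟩ = x then
            μ0 ((Fin.snoc q y : Fin (n+2) → Fin d) 0) *
              ∏ s : Fin (n+1), w s ((Fin.snoc q y : Fin (n+2) → Fin d) s.castSucc)
                ((Fin.snoc q y : Fin (n+2) → Fin d) s.succ) else 0)
          = (if q ⟨t, Nat.lt_succ_of_le htn⟩ = x then
              μ0 (q 0) * ∏ s : Fin n, w s (q s.castSucc) (q s.succ) else 0) * w n (q (Fin.last n)) y := by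
        intro y
        rw [hcoord, hzero, hprod]
        by_cases h : q ⟨t, Nat.lt_succ_of_le htn⟩ = x <;> simp [h, mul_assoc]
      rw [Finset.sum_congr rfl (fun y _ => step y), ← Finset.mul_sum,
        hw n htn (Nat.lt_succ_self n), mul_one]
    · -- t = n + 1
      have hteq : t = n + 1 := le_antisymm ht hge
      subst hteq
      have hcoord : ∀ (q : Fin (n+1) → Fin d) (y : Fin d),
          (Fin.snoc q y : Fin (n+2) → Fin d) ⟨n+1, Nat.lt_succ_of_le ht⟩ = y := by
        intro q y
        rw [show (⟨n+1, Nat.lt_succ_of_le ht⟩ : Fin (n+2)) = Fin.last (n+1) from rfl, Fin.snoc_last]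
      have key : ∀ q : Fin (n+1) → Fin d, ∀ y : Fin d,
          (if (Fin.snoc q y : Fin (n+2) → Fin d) ⟨n+1, Nat.lt_succ_of_le ht⟩ = x then
            μ0 ((Fin.snoc q y : Fin (n+2) → Fin d) 0) *
              ∏ s : Fin (n+1), w s ((Fin.snoc q y : Fin (n+2) → Fin d) s.castSucc)
                ((Fin.snoc q y : Fin (n+2) → Fin d) s.succ) else 0)
          = (if y = x then (μ0 (q 0) * ∏ s : Fin n, w s (q s.castSucc) (q s.succ))
              * w n (q (Fin.last n)) y else 0) := by
        intro q y
        rw [hcoord, hzero, hprod]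
        by_cases h : y = x <;> simp [h, mul_assoc]
      have inner : ∀ q : Fin (n+1) → Fin d,
          (∑ y : Fin d, if y = x then (μ0 (q 0) * ∏ s : Fin n, w s (q s.castSucc) (q s.succ))
              * w n (q (Fin.last n)) y else 0)
          = (μ0 (q 0) * ∏ s : Fin n, w s (q s.castSucc) (q s.succ)) * w n (q (Fin.last n)) x := by
        intro q
        rw [Finset.sum_ite_eq']; simp
      have expand : ∀ q : Fin (n+1) → Fin d,
          (μ0 (q 0) * ∏ s : Fin n, w s (q s.castSucc) (q s.succ)) * w n (q (Fin.last n)) x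
          = ∑ y' : Fin d, (if q ⟨n, Nat.lt_succ_of_le (le_refl n)⟩ = y' then
              μ0 (q 0) * ∏ s : Fin n, w s (q s.castSucc) (q s.succ) else 0) * w n y' x := by
        intro q
        have h1 : ∀ y' : Fin d,
            (if q ⟨n, Nat.lt_succ_of_le (le_refl n)⟩ = y' then
              μ0 (q 0) * ∏ s : Fin n, w s (q s.castSucc) (q s.succ) else 0) * w n y' x
            = (if q ⟨n, Nat.lt_succ_of_le (le_refl n)⟩ = y' then
              (μ0 (q 0) * ∏ s : Fin n, w s (q s.castSucc) (q s.succ)) * w n y' x else 0) := by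
          intro y'
          by_cases h : q ⟨n, Nat.lt_succ_of_le (le_refl n)⟩ = y' <;> simp [h]
        rw [Finset.sum_congr rfl (fun y' _ => h1 y'), Finset.sum_ite_eq]
        simp only [Finset.mem_univ, if_true]
        rfl
      calc ∑ q : Fin (n+1) → Fin d, ∑ y : Fin d,
            (if (Fin.snoc q y : Fin (n+2) → Fin d) ⟨n+1, Nat.lt_succ_of_le ht⟩ = x then
              μ0 ((Fin.snoc q y : Fin (n+2) → Fin d) 0) *
                ∏ s : Fin (n+1), w s ((Fin.snoc q y : Fin (n+2) → Fin d) s.castSucc)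
                  ((Fin.snoc q y : Fin (n+2) → Fin d) s.succ) else 0)
          = ∑ q : Fin (n+1) → Fin d,
              (μ0 (q 0) * ∏ s : Fin n, w s (q s.castSucc) (q s.succ)) * w n (q (Fin.last n)) x := by
            refine Finset.sum_congr rfl fun q _ => ?_
            rw [Finset.sum_congr rfl (fun y _ => key q y), inner q]
        _ = ∑ q : Fin (n+1) → Fin d, ∑ y' : Fin d,
              (if q ⟨n, Nat.lt_succ_of_le (le_refl n)⟩ = y' then
                μ0 (q 0) * ∏ s : Fin n, w s (q s.castSucc) (q s.succ) else 0) * w n y' x :=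
            Finset.sum_congr rfl (fun q _ => expand q)
        _ = ∑ y' : Fin d, (∑ q : Fin (n+1) → Fin d,
              if q ⟨n, Nat.lt_succ_of_le (le_refl n)⟩ = y' then
                μ0 (q 0) * ∏ s : Fin n, w s (q s.castSucc) (q s.succ) else 0) * w n y' x := by
            rw [Finset.sum_comm]
            exact Finset.sum_congr rfl (fun y' _ => (Finset.sum_mul _ _ _).symm)
        _ = ∑ y' : Fin d, fwdF d μ0 w n y' * w n y' x := by
            refine Finset.sum_congr rfl fun y' _ => ?_
            rw [ih n (le_refl n) (fun s hs hs' a => absurd hs' (not_lt.mpr hs)) y']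
        _ = fwdF d μ0 w (n+1) x := rfl

/-- Sum over observation paths with first `t` coordinates pinned. -/
lemma zsum {T M : ℕ} (t : ℕ) (z : ℕ → Fin M) (g : Fin T → Fin M → ℝ)
    (hg : ∀ s, ∑ j, g s j = 1) :
    ∑ zq : Fin T → Fin M,
      (if (∀ s : Fin T, s.val < t → zq s = z s.val) then ∏ s, g s (zq s) else 0)
      = ∏ s : Fin T, (if s.val < t then g s (z s.val) else 1) := by
  have step1 : ∀ zq : Fin T → Fin M,
      (if (∀ s : Fin T, s.val < t → zq s = z s.val) then ∏ s, g s (zq s) else 0)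
      = ∏ s : Fin T, (if s.val < t then (if zq s = z s.val then g s (zq s) else 0) else g s (zq s)) := by
    intro zq
    by_cases hc : ∀ s : Fin T, s.val < t → zq s = z s.val
    · rw [if_pos hc]
      refine Finset.prod_congr rfl fun s _ => ?_
      by_cases hs : s.val < t
      · rw [if_pos hs, if_pos (hc s hs)]
      · rw [if_neg hs]
    · rw [if_neg hc]
      push_neg at hc
      obtain ⟨s, hs, hne⟩ := hc
      refine (Finset.prod_eq_zero (Finset.mem_univ s) ?_).symm
      rw [if_pos hs, if_neg hne]
  rw [Finset.sum_congr rfl (fun zq _ => step1 zq)]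
  have step2 : ∑ zq : Fin T → Fin M,
      ∏ s : Fin T, (if s.val < t then (if zq s = z s.val then g s (zq s) else 0) else g s (zq s))
      = ∏ s : Fin T, ∑ j : Fin M, (if s.val < t then (if j = z s.val then g s j else 0) else g s j) := by
    rw [Finset.prod_univ_sum (fun _ => (Finset.univ : Finset (Fin M)))]
    rw [Fintype.piFinset_univ]
  rw [step2]
  refine Finset.prod_congr rfl fun s _ => ?_
  by_cases hs : s.val < t
  · simp only [if_pos hs]
    rw [Finset.sum_ite_eq']
    simp
  · simp only [if_neg hs]
    exact hg s

/-- Unnormalized forward filter. -/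
noncomputable def alphaF (d m : ℕ) (μ0 : Fin d → ℝ) (A : Matrix (Fin d) (Fin d) ℝ)
    (C : Fin d → Fin (m + 1) → ℝ) (z : ℕ → Fin (m + 1)) : ℕ → Fin d → ℝ
  | 0 => μ0
  | t + 1 => fun x => ∑ y, alphaF d m μ0 A C z t y * C y (z t) * A y x

lemma fwdF_eq_alphaF (d m : ℕ) (μ0 : Fin d → ℝ) (A : Matrix (Fin d) (Fin d) ℝ)
    (C : Fin d → Fin (m + 1) → ℝ) (z : ℕ → Fin (m + 1)) (t : ℕ) :
    ∀ k, k ≤ t →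
      fwdF d μ0 (fun s a b => A a b * (if s < t then C a (z s) else 1)) k
        = alphaF d m μ0 A C z k := by
  intro k
  induction k with
  | zero => intro _; rfl
  | succ k ih =>
    intro hk
    funext x
    show (∑ y, fwdF d μ0 _ k y * (A y x * (if k < t then C y (z k) else 1)))
      = ∑ y, alphaF d m μ0 A C z k y * C y (z k) * A y x
    rw [ih (Nat.le_of_succ_le hk)]
    refine Finset.sum_congr rfl fun y _ => ?_
    rw [if_pos (Nat.lt_of_succ_le hk)]
    ring

/-- The numerator of `filt` equals the unnormalized forward filter. -/
lemma num_eq_alphaF (d m T : ℕ) (μ0 : Fin d → ℝ) (A : Matrix (Fin d) (Fin d) ℝ)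
    (C : Fin d → Fin (m + 1) → ℝ) (hA1 : ∀ x, ∑ y, A x y = 1) (hC1 : ∀ x, ∑ j, C x j = 1)
    (z : ℕ → Fin (m + 1)) (t : ℕ) (ht : t ≤ T) (x : Fin d) :
    (∑ xp : Fin (T + 1) → Fin d, ∑ zq : Fin T → Fin (m + 1),
        if (∀ s : Fin T, s.val < t → zq s = z s.val) ∧ xp ⟨t, Nat.lt_succ_of_le ht⟩ = x
        then hmmJoint d m T μ0 A C xp zq else 0)
      = alphaF d m μ0 A C z t x := by
  have inner : ∀ xp : Fin (T + 1) → Fin d,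
      (∑ zq : Fin T → Fin (m + 1),
        if (∀ s : Fin T, s.val < t → zq s = z s.val) ∧ xp ⟨t, Nat.lt_succ_of_le ht⟩ = x
        then hmmJoint d m T μ0 A C xp zq else 0)
      = (if xp ⟨t, Nat.lt_succ_of_le ht⟩ = x then
          μ0 (xp 0) * ∏ s : Fin T,
            (A (xp s.castSucc) (xp s.succ) * (if s.val < t then C (xp s.castSucc) (z s.val) else 1))
          else 0) := by
    intro xp
    by_cases hx : xp ⟨t, Nat.lt_succ_of_le ht⟩ = x
    · rw [if_pos hx]
      have e1 : ∀ zq : Fin T → Fin (m + 1),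
          (if (∀ s : Fin T, s.val < t → zq s = z s.val) ∧ xp ⟨t, Nat.lt_succ_of_le ht⟩ = x
            then hmmJoint d m T μ0 A C xp zq else 0)
          = (μ0 (xp 0) * ∏ s : Fin T, A (xp s.castSucc) (xp s.succ)) *
              (if (∀ s : Fin T, s.val < t → zq s = z s.val)
                then ∏ s : Fin T, C (xp s.castSucc) (zq s) else 0) := by
        intro zq
        by_cases hz : ∀ s : Fin T, s.val < t → zq s = z s.val
        · rw [if_pos ⟨hz, hx⟩, if_pos hz, hmmJoint]
        · rw [if_neg (fun h => hz h.1), if_neg hz, mul_zero]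
      rw [Finset.sum_congr rfl (fun zq _ => e1 zq), ← Finset.mul_sum,
        zsum t z (fun s j => C (xp s.castSucc) j) (fun s => hC1 _),
        mul_assoc, ← Finset.prod_mul_distrib]
    · rw [if_neg hx]
      refine Finset.sum_eq_zero fun zq _ => ?_
      rw [if_neg (fun h => hx h.2)]
  rw [Finset.sum_congr rfl (fun xp _ => inner xp)]
  rw [pathsum d μ0 (fun s a b => A a b * (if s < t then C a (z s) else 1)) T t ht
    (fun s hs _ a => by
      simp only [if_neg (not_lt.mpr hs), mul_one]
      exact hA1 a) x]
  exact congrFun (fwdF_eq_alphaF d m μ0 A C z t t (le_refl t)) x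



lemma hmmJoint_nonneg (d m T : ℕ) (μ0 : Fin d → ℝ) (A : Matrix (Fin d) (Fin d) ℝ)
    (C : Fin d → Fin (m + 1) → ℝ) (hμ0 : ∀ x, 0 ≤ μ0 x) (hA0 : ∀ x y, 0 ≤ A x y)
    (hC0 : ∀ x j, 0 ≤ C x j) (xp : Fin (T + 1) → Fin d) (zq : Fin T → Fin (m + 1)) :
    0 ≤ hmmJoint d m T μ0 A C xp zq := by
  unfold hmmJoint
  refine mul_nonneg (mul_nonneg (hμ0 _) ?_) ?_ <;>
    exact Finset.prod_nonneg (fun s _ => by first | exact hA0 _ _ | exact hC0 _ _)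

lemma alphaF_nonneg (d m : ℕ) (μ0 : Fin d → ℝ) (A : Matrix (Fin d) (Fin d) ℝ)
    (C : Fin d → Fin (m + 1) → ℝ) (z : ℕ → Fin (m + 1))
    (hμ0 : ∀ x, 0 ≤ μ0 x) (hA0 : ∀ x y, 0 ≤ A x y) (hC0 : ∀ x j, 0 ≤ C x j) :
    ∀ t x, 0 ≤ alphaF d m μ0 A C z t x := by
  intro t
  induction t with
  | zero => exact hμ0
  | succ t ih =>
    intro x
    exact Finset.sum_nonneg fun y _ =>
      mul_nonneg (mul_nonneg (ih y) (hC0 _ _)) (hA0 _ _)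

lemma den_eq_alphaF (d m T : ℕ) (μ0 : Fin d → ℝ) (A : Matrix (Fin d) (Fin d) ℝ)
    (C : Fin d → Fin (m + 1) → ℝ) (hA1 : ∀ x, ∑ y, A x y = 1) (hC1 : ∀ x, ∑ j, C x j = 1)
    (z : ℕ → Fin (m + 1)) (t : ℕ) (ht : t ≤ T) :
    (∑ xp : Fin (T + 1) → Fin d, ∑ zq : Fin T → Fin (m + 1),
        if ∀ s : Fin T, s.val < t → zq s = z s.val
        then hmmJoint d m T μ0 A C xp zq else 0)
      = ∑ x, alphaF d m μ0 A C z t x := by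
  have swap : ∀ (xp : Fin (T + 1) → Fin d) (zq : Fin T → Fin (m + 1)),
      (if (∀ s : Fin T, s.val < t → zq s = z s.val) then hmmJoint d m T μ0 A C xp zq else 0)
      = ∑ x : Fin d, (if (∀ s : Fin T, s.val < t → zq s = z s.val) ∧ xp ⟨t, Nat.lt_succ_of_le ht⟩ = x
          then hmmJoint d m T μ0 A C xp zq else 0) := by
    intro xp zq
    by_cases hz : ∀ s : Fin T, s.val < t → zq s = z s.val
    · rw [if_pos hz]
      have : ∀ x : Fin d,
          (if (∀ s : Fin T, s.val < t → zq s = z s.val) ∧ xp ⟨t, Nat.lt_succ_of_le ht⟩ = x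
            then hmmJoint d m T μ0 A C xp zq else 0)
          = (if xp ⟨t, Nat.lt_succ_of_le ht⟩ = x then hmmJoint d m T μ0 A C xp zq else 0) := by
        intro x
        by_cases hx : xp ⟨t, Nat.lt_succ_of_le ht⟩ = x
        · rw [if_pos ⟨hz, hx⟩, if_pos hx]
        · rw [if_neg (fun h => hx h.2), if_neg hx]
      rw [Finset.sum_congr rfl (fun x _ => this x), Finset.sum_ite_eq]
      simp
    · rw [if_neg hz]
      exact (Finset.sum_eq_zero fun x _ => if_neg (fun h => hz h.1)).symm
  rw [Finset.sum_congr rfl (fun xp (_ : xp ∈ Finset.univ) =>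
    Finset.sum_congr rfl (fun zq (_ : zq ∈ Finset.univ) => swap xp zq))]
  rw [Finset.sum_congr rfl (fun xp (_ : xp ∈ Finset.univ) => Finset.sum_comm), Finset.sum_comm]
  exact Finset.sum_congr rfl (fun x _ => num_eq_alphaF d m T μ0 A C hA1 hC1 z t ht x)

lemma alphaF_sum_pos (d m T : ℕ) (μ0 : Fin d → ℝ) (A : Matrix (Fin d) (Fin d) ℝ)
    (C : Fin d → Fin (m + 1) → ℝ) (hμ0 : ∀ x, 0 ≤ μ0 x)
    (hA0 : ∀ x y, 0 ≤ A x y) (hA1 : ∀ x, ∑ y, A x y = 1)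
    (hC0 : ∀ x j, 0 ≤ C x j) (hC1 : ∀ x, ∑ j, C x j = 1)
    (z : ℕ → Fin (m + 1))
    (hzpos : 0 < ∑ xp : Fin (T + 1) → Fin d, hmmJoint d m T μ0 A C xp (fun s => z s.val))
    (t : ℕ) (ht : t ≤ T) :
    0 < ∑ x, alphaF d m μ0 A C z t x := by
  rw [← den_eq_alphaF d m T μ0 A C hA1 hC1 z t ht]
  refine lt_of_lt_of_le hzpos (Finset.sum_le_sum fun xp _ => ?_)
  have hnn : ∀ zq : Fin T → Fin (m + 1), zq ∈ Finset.univ →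
      (0 : ℝ) ≤ if ∀ s : Fin T, s.val < t → zq s = z s.val
        then hmmJoint d m T μ0 A C xp zq else 0 := by
    intro zq _
    by_cases h : ∀ s : Fin T, s.val < t → zq s = z s.val
    · rw [if_pos h]; exact hmmJoint_nonneg d m T μ0 A C hμ0 hA0 hC0 xp zq
    · rw [if_neg h]
  have := Finset.single_le_sum hnn (Finset.mem_univ (fun s : Fin T => z s.val))
  rwa [if_pos (fun s _ => rfl)] at this

lemma filt_eq_alphaF (d m T : ℕ) (μ0 : Fin d → ℝ) (A : Matrix (Fin d) (Fin d) ℝ)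
    (C : Fin d → Fin (m + 1) → ℝ) (hA1 : ∀ x, ∑ y, A x y = 1) (hC1 : ∀ x, ∑ j, C x j = 1)
    (z : ℕ → Fin (m + 1)) (t : ℕ) (ht : t ≤ T) (x : Fin d) :
    filt d m T μ0 A C z t x
      = alphaF d m μ0 A C z t x / ∑ x', alphaF d m μ0 A C z t x' := by
  unfold filt
  rw [dif_pos ht, num_eq_alphaF d m T μ0 A C hA1 hC1 z t ht x,
    den_eq_alphaF d m T μ0 A C hA1 hC1 z t ht]


/-- One-step identity for the dual/backward recursion. -/
lemma core_step (d : ℕ) (A : Matrix (Fin d) (Fin d) ℝ) (hA1 : ∀ x, ∑ w, A x w = 1)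
    (α α' : Fin d → ℝ) (hα : ∀ x, 0 ≤ α x)
    (Cv : Fin d → ℝ) (hCle : ∀ x, Cv x ≤ 1)
    (hα' : ∀ x, α' x = ∑ w, α w * Cv w * A w x)
    (L L' : ℝ) (hL : L = ∑ x, α x) (hL' : L' = ∑ x, α' x)
    (hLpos : 0 < L) (hL'pos : 0 < L')
    (π c : Fin d → ℝ) (hπ : ∀ x, π x = α x / L)
    (hc : ∀ x, c x = 2 * Cv x - 1) (y : Fin d → ℝ) :
    (∑ x, (α x / L) * ((∑ w, A x w * y w) + c x * phi d A y π c))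
        - ∑ x, (α' x / L') * y x
      = phi d A y π c := by
  obtain ⟨u, hu⟩ : ∃ v, phi d A y π c = v := ⟨_, rfl⟩
  obtain ⟨b, hb⟩ : ∃ v, (∑ x, π x * c x) = v := ⟨_, rfl⟩
  obtain ⟨P, hP⟩ : ∃ v, (∑ x, π x * (∑ w, A x w * y w)) = v := ⟨_, rfl⟩
  obtain ⟨Q, hQ⟩ : ∃ v, (∑ x, π x * ((∑ w, A x w * y w) * c x)) = v := ⟨_, rfl⟩
  have hLne : L ≠ 0 := ne_of_gt hLpos
  have hL'ne : L' ≠ 0 := ne_of_gt hL'pos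
  have hL'sum : ∑ x, α x * Cv x = L' := by
    rw [hL', Finset.sum_congr rfl (fun x (_ : x ∈ Finset.univ) => hα' x), Finset.sum_comm]
    refine Finset.sum_congr rfl (fun w _ => ?_)
    rw [← Finset.mul_sum, hA1, mul_one]
  have hπ1 : ∑ x, π x = 1 := by
    rw [Finset.sum_congr rfl (fun x (_ : x ∈ Finset.univ) => hπ x), ← Finset.sum_div, ← hL,
      div_self hLne]
  have hbval : b = (2 * L' - L) / L := by
    rw [← hb,
      Finset.sum_congr rfl (fun x (_ : x ∈ Finset.univ) =>
        (by rw [hπ x, hc x]; ring :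
          π x * c x = (α x * Cv x * 2 - α x) / L)),
      ← Finset.sum_div]
    congr 1
    rw [Finset.sum_sub_distrib, ← Finset.sum_mul, hL'sum, ← hL]
    ring
  have h1b : 1 + b = 2 * L' / L := by rw [hbval]; field_simp; ring
  have h1bpos : 0 < 1 + b := by rw [h1b]; positivity
  have h1bne : 1 + b ≠ 0 := ne_of_gt h1bpos
  have h2L' : 2 * L' = L * (1 + b) := by rw [h1b]; field_simp
  -- first sum
  have e1 : (∑ x, (α x / L) * ((∑ w, A x w * y w) + c x * u)) = P + b * u := by
    rw [Finset.sum_congr rfl (fun x (_ : x ∈ Finset.univ) =>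
      (by rw [← hπ x]; ring :
        (α x / L) * ((∑ w, A x w * y w) + c x * u)
          = π x * (∑ w, A x w * y w) + (π x * c x) * u)),
      Finset.sum_add_distrib, ← Finset.sum_mul, hP, hb]
  -- second sum
  have hLP : ∑ x, α x * (∑ w, A x w * y w) = L * P := by
    rw [← hP, Finset.mul_sum]
    refine Finset.sum_congr rfl (fun x _ => ?_)
    rw [hπ x]
    field_simp
  have hLQ : ∑ x, α x * ((∑ w, A x w * y w) * c x) = L * Q := by
    rw [← hQ, Finset.mul_sum]
    refine Finset.sum_congr rfl (fun x _ => ?_)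
    rw [hπ x]
    field_simp
  have e2 : (∑ x, (α' x / L') * y x) = (L * P + L * Q) / (2 * L') := by
    rw [Finset.sum_congr rfl (fun x (_ : x ∈ Finset.univ) =>
        (div_mul_eq_mul_div _ _ _ : (α' x / L') * y x = (α' x * y x) / L')),
      ← Finset.sum_div]
    rw [Finset.sum_congr rfl (fun x (_ : x ∈ Finset.univ) =>
      (by rw [hα', Finset.sum_mul] : α' x * y x = ∑ w, α w * Cv w * A w x * y x)),
      Finset.sum_comm]
    have : ∀ w, (∑ x, α w * Cv w * A w x * y x)
        = (α w * (∑ x, A w x * y x) + α w * ((∑ x, A w x * y x) * c w)) / 2 := by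
      intro w
      have hcw : Cv w = (c w + 1) / 2 := by rw [hc w]; ring
      have hsplit : (∑ x, α w * Cv w * A w x * y x) = α w * Cv w * ∑ x, A w x * y x := by
        rw [Finset.mul_sum]
        exact Finset.sum_congr rfl (fun x _ => by ring)
      rw [hsplit, hcw]
      ring
    rw [Finset.sum_congr rfl (fun w (_ : w ∈ Finset.univ) => this w), ← Finset.sum_div,
      Finset.sum_add_distrib, hLP, hLQ, div_div]
  -- phi
  have hphi : u = if 1 - b ^ 2 ≠ 0 then (-1 / (1 - b ^ 2)) * (Q - b * P) else 0 := by
    rw [← hu]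
    unfold phi
    rw [hb]
    by_cases hcase : 1 - b ^ 2 ≠ 0
    · rw [if_pos hcase, if_pos hcase]
      congr 1
      rw [← hQ, ← hP, Finset.mul_sum, ← Finset.sum_sub_distrib]
      refine Finset.sum_congr rfl (fun x _ => ?_)
      ring
    · rw [if_neg hcase, if_neg hcase]
  rw [hu, e1, e2]
  by_cases hcase : 1 - b ^ 2 ≠ 0
  · rw [if_pos hcase] at hphi
    have h1mbne : 1 - b ≠ 0 := by
      intro h
      exact hcase (by linear_combination (1 + b) * h)
    rw [hphi, h2L']
    field_simp
    ring
  · rw [if_neg hcase] at hphi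
    push_neg at hcase
    have hb1 : b = 1 := by
      rcases mul_eq_zero.mp (show (1 - b) * (1 + b) = 0 by linear_combination hcase) with h | h
      · linarith
      · exact absurd h h1bne
    -- degenerate case: α x * Cv x = α x for all x
    have hzero : ∀ x, π x * (1 - c x) = 0 := by
      have hsum : ∑ x, π x * (1 - c x) = 0 := by
        rw [Finset.sum_congr rfl (fun x (_ : x ∈ Finset.univ) =>
          (by ring : π x * (1 - c x) = π x - π x * c x)), Finset.sum_sub_distrib, hπ1, hb, hb1]
        ring
      have hnn : ∀ x ∈ Finset.univ, (0 : ℝ) ≤ π x * (1 - c x) := by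
        intro x _
        refine mul_nonneg ?_ ?_
        · rw [hπ x]; exact div_nonneg (hα x) (le_of_lt hLpos)
        · rw [hc x]; linarith [hCle x]
      intro x
      exact (Finset.sum_eq_zero_iff_of_nonneg hnn).mp hsum x (Finset.mem_univ x)
    have hQP : Q = P := by
      rw [← hQ, ← hP]
      refine Finset.sum_congr rfl (fun x _ => ?_)
      have h2 : π x * c x = π x := by linear_combination - hzero x
      linear_combination (∑ w, A x w * y w) * h2
    have hLL : L' = L := by
      have : (2 : ℝ) * L' / L = 2 := by rw [← h1b, hb1]; norm_num
      field_simp at this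
      linarith
    rw [hphi, hQP, hLL]
    field_simp
    ring
/-- Fixed-point property of the nonlinear filter: for an `HMM(μ₀,A,C)` and an
observation path `z` of positive probability, the map `𝒩` built from the
backward difference equation with `c_{s+1}(x) = 2C(x,z_{s+1}) - 1` and feedback
`φ` evaluated at the filter measures `ρ_s = π_s^{(z)}` (and `ρ_0 = μ₀`)
reproduces the filter: `(𝒩 π^{(z)})_t(f) = π_t^{(z)}(f)` for `1 ≤ t ≤ T`. -/
theorem filter_fixed_point (d m T : ℕ)
    (μ0 : Fin d → ℝ) (A : Matrix (Fin d) (Fin d) ℝ) (C : Fin d → Fin (m + 1) → ℝ)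
    (hμ0 : ∀ x, 0 ≤ μ0 x) (hμ1 : ∑ x, μ0 x = 1)
    (hA0 : ∀ x y, 0 ≤ A x y) (hA1 : ∀ x, ∑ y, A x y = 1)
    (hC0 : ∀ x z, 0 ≤ C x z) (hC1 : ∀ x, ∑ z, C x z = 1)
    (z : ℕ → Fin (m + 1))
    (hzpos : 0 < ∑ xp : Fin (T + 1) → Fin d,
      hmmJoint d m T μ0 A C xp (fun s => z s.val)) :
    ∀ t : ℕ, 1 ≤ t → t ≤ T → ∀ f : Fin d → ℝ,
      Nmap d μ0 A
        (fun s x => 2 * C x (z s) - 1)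
        (fun s => if s = 0 then μ0 else filt d m T μ0 A C z s)
        t f =
      ∑ x, filt d m T μ0 A C z t x * f x := by
  intro t ht1 htT f
  set F := alphaF d m μ0 A C z with hF
  set cs : ℕ → Fin d → ℝ := fun s x => 2 * C x (z s) - 1 with hcs
  set νs : ℕ → Fin d → ℝ := fun s => if s = 0 then μ0 else filt d m T μ0 A C z s with hνs
  have hCle : ∀ (x : Fin d) (j : Fin (m + 1)), C x j ≤ 1 := by
    intro x j
    have h := Finset.single_le_sum (f := fun j' => C x j') (fun j' _ => hC0 x j')
      (Finset.mem_univ j)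
    rwa [hC1 x] at h
  have hα : ∀ s x, 0 ≤ F s x := by
    rw [hF]; exact alphaF_nonneg d m μ0 A C z hμ0 hA0 hC0
  have hLpos : ∀ s, s ≤ T → 0 < ∑ x, F s x := by
    rw [hF]
    exact fun s hs => alphaF_sum_pos d m T μ0 A C hμ0 hA0 hA1 hC0 hC1 z hzpos s hs
  have hL0 : ∑ x, F 0 x = 1 := by rw [hF]; exact hμ1
  have hfilt : ∀ s, s ≤ T → ∀ x, filt d m T μ0 A C z s x = F s x / ∑ x', F s x' := by
    rw [hF]
    exact fun s hs x => filt_eq_alphaF d m T μ0 A C hA1 hC1 z s hs x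
  have hνeq : ∀ s, s ≤ T → ∀ x, νs s x = F s x / ∑ x', F s x' := by
    intro s hs x
    simp only [hνs]
    by_cases h0 : s = 0
    · subst h0
      rw [if_pos rfl, hL0, div_one]
      rfl
    · rw [if_neg h0]
      exact hfilt s hs x
  have hα' : ∀ s x, F (s + 1) x = ∑ w, F s w * C w (z s) * A w x := by
    rw [hF]; exact fun s x => rfl
  have tele : ∀ j, j ≤ t →
      (∑ x, (F (t - j) x / ∑ x', F (t - j) x') * ydual d A cs νs t f j x)
        = (∑ x, (F t x / ∑ x', F t x') * f x)
          + ∑ k ∈ Finset.range j, udual d A cs νs t f k := by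
    intro j
    induction j with
    | zero => intro _; simp [ydual]
    | succ j ih =>
      intro hj
      have hsub : t - (j + 1) = t - j - 1 := (Nat.sub_sub t j 1).symm
      have hstep : t - j = (t - j - 1) + 1 := by omega
      have hyd : ydual d A cs νs t f (j + 1)
          = fun x => (∑ w, A x w * ydual d A cs νs t f j w)
            + cs (t - j - 1) x * phi d A (ydual d A cs νs t f j) (νs (t - j - 1))
                (cs (t - j - 1)) := rfl
      have hcore := core_step d A hA1 (F (t - j - 1)) (F ((t - j - 1) + 1))
        (fun x => hα (t - j - 1) x) (fun x => C x (z (t - j - 1)))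
        (fun x => hCle x (z (t - j - 1)))
        (fun x => hα' (t - j - 1) x)
        (∑ x, F (t - j - 1) x) (∑ x, F ((t - j - 1) + 1) x) rfl rfl
        (hLpos (t - j - 1) (by omega)) (hLpos ((t - j - 1) + 1) (by omega))
        (νs (t - j - 1)) (cs (t - j - 1))
        (fun x => hνeq (t - j - 1) (by omega) x) (fun x => rfl)
        (ydual d A cs νs t f j)
      rw [hsub]
      simp only [hyd]
      rw [sub_eq_iff_eq_add.mp hcore, ← hstep, ih (Nat.le_of_succ_le hj),
        Finset.sum_range_succ]
      have hud : udual d A cs νs t f j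
          = phi d A (ydual d A cs νs t f j) (νs (t - j - 1)) (cs (t - j - 1)) := rfl
      rw [hud]
      ring
  have hmain := tele t (le_refl t)
  rw [Nat.sub_self] at hmain
  unfold Nmap
  have hμy : ∑ x, μ0 x * ydual d A cs νs t f t x
      = ∑ x, (F 0 x / ∑ x', F 0 x') * ydual d A cs νs t f t x := by
    refine Finset.sum_congr rfl fun x _ => ?_
    rw [hL0, div_one, hF, show alphaF d m μ0 A C z 0 = μ0 from rfl]
  rw [hμy, hmain, add_sub_cancel_right]
  refine Finset.sum_congr rfl fun x _ => ?_
  rw [hfilt t htT x]
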